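/- arXiv:1902.03675 — 3 statements merged into one kernel-verified Lean document; each statement's English description precedes it below -/
import Mathlib

section
/- Let k be a nonnegative integer and R > 0. Suppose f : [0,R) → ℝ is such that the function F defined on the open ball B_R = {x ∈ ℝ³ : |x| < R} by F(x) = f(|x|) is of class C^{k+2}. Then f is of class C^{k+2} on [0,R), its first derivative satisfies f'(0) = 0, and the function h defined by h(r) = (1/r) f'(r) for 0 < r < R and h(0) = f''(0) is of class C^k on [0,R). -/
open Set Metric Filter

lemma line2aux {EE : Type*} [NormedAddCommGroup EE] [NormedSpace ℝ EE]
    {F : EE → ℝ} {s : Set EE} (hs : IsOpen s) (hF : ContDiffOn ℝ 2 F s)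
    {x : EE} (hx : x ∈ s) (v : EE) :
    HasDerivAt (fun t : ℝ => fderiv ℝ F (x + t • v) v)
      (fderiv ℝ (fderiv ℝ F) x v v) 0 := by
  have h1 : ContDiffOn ℝ 1 (fderiv ℝ F) s := hF.fderiv_of_isOpen hs (by norm_num)
  have h2 : DifferentiableAt ℝ (fderiv ℝ F) x :=
    (h1.contDiffAt (hs.mem_nhds hx)).differentiableAt one_ne_zero
  have hc : HasDerivAt (fun t : ℝ => x + t • v) v 0 := by
    simpa using ((hasDerivAt_id (0 : ℝ)).smul_const v).const_add x
  have h3 : HasDerivAt (fun t : ℝ => fderiv ℝ F (x + t • v))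
      (fderiv ℝ (fderiv ℝ F) x v) 0 := by
    have h4 : HasFDerivAt (fderiv ℝ F) (fderiv ℝ (fderiv ℝ F) x) ((fun t : ℝ => x + t • v) 0) := by
      simpa using h2.hasFDerivAt
    exact h4.comp_hasDerivAt 0 hc
  have h5 := (ContinuousLinearMap.apply ℝ ℝ v).hasFDerivAt.comp_hasDerivAt 0 h3
  exact h5

set_option maxHeartbeats 1000000 in
/-- If the spherically symmetric function `F(x) = f(|x|)` on the ball
`B_R ⊆ ℝ³` is of class `C^{k+2}`, then `f ∈ C^{k+2}([0,R))`, `f'(0) = 0`, and the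
function `h` with `h(r) = f'(r)/r` for `r ≠ 0` and `h(0) = f''(0)` is of class
`C^k([0,R))`. -/
theorem stmt0 (k : ℕ) (R : ℝ) (hR : 0 < R) (f : ℝ → ℝ)
    (hF : ContDiffOn ℝ ((k : ℕ∞) + 2)
      (fun x : EuclideanSpace ℝ (Fin 3) => f ‖x‖) (Metric.ball 0 R)) :
    ContDiffOn ℝ ((k : ℕ∞) + 2) f (Set.Ico 0 R) ∧
    derivWithin f (Set.Ico 0 R) 0 = 0 ∧
    ContDiffOn ℝ (k : ℕ∞)
      (fun r => if r = 0
        then derivWithin (derivWithin f (Set.Ico 0 R)) (Set.Ico 0 R) 0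
        else derivWithin f (Set.Ico 0 R) r / r)
      (Set.Ico 0 R) := by
  classical
  set F : EuclideanSpace ℝ (Fin 3) → ℝ := fun x => f ‖x‖ with hFdef
  set e₁ : EuclideanSpace ℝ (Fin 3) := EuclideanSpace.single 0 1 with he₁def
  set e₂ : EuclideanSpace ℝ (Fin 3) := EuclideanSpace.single 1 1 with he₂def
  have he₁ : ‖e₁‖ = 1 := by rw [he₁def, EuclideanSpace.norm_single]; norm_num
  have he₂ : ‖e₂‖ = 1 := by rw [he₂def, EuclideanSpace.norm_single]; norm_num
  have hnorm1 : ∀ t : ℝ, ‖t • e₁‖ = |t| := by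
    intro t; rw [norm_smul, he₁, mul_one, Real.norm_eq_abs]
  have hnorm2 : ∀ t : ℝ, ‖t • e₂‖ = |t| := by
    intro t; rw [norm_smul, he₂, mul_one, Real.norm_eq_abs]
  have hnorm12 : ∀ t s : ℝ, ‖t • e₁ + s • e₂‖ = Real.sqrt (t ^ 2 + s ^ 2) := by
    intro t s
    rw [EuclideanSpace.norm_eq]
    congr 1
    rw [Fin.sum_univ_three]
    simp [he₁def, he₂def, EuclideanSpace.single_apply, Real.norm_eq_abs, sq_abs]
  set g : ℝ → ℝ := fun t => f |t| with hgdef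
  have hι : ContDiff ℝ ((k : ℕ∞) + 2) (fun t : ℝ => t • e₁) := contDiff_id.smul contDiff_const
  have hι₂ : ContDiff ℝ ((k : ℕ∞) + 2) (fun t : ℝ => t • e₂) := contDiff_id.smul contDiff_const
  have hmaps : MapsTo (fun t : ℝ => t • e₁) (Ioo (-R) R) (ball 0 R) := by
    intro t ht
    rw [mem_ball_zero_iff, hnorm1]
    exact abs_lt.2 ⟨ht.1, ht.2⟩
  have hIoo : IsOpen (Ioo (-R) R) := isOpen_Ioo
  have hg : ContDiffOn ℝ ((k : ℕ∞) + 2) g (Ioo (-R) R) := by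
    refine (hF.comp hι.contDiffOn hmaps).congr ?_
    intro t ht
    simp [hgdef, hFdef, hnorm1]
  have hgat : ∀ t ∈ Ioo (-R) R, ContDiffAt ℝ ((k : ℕ∞) + 2) g t :=
    fun t ht => hg.contDiffAt (hIoo.mem_nhds ht)
  have h0mem : (0 : ℝ) ∈ Ioo (-R) R := ⟨neg_lt_zero.2 hR, hR⟩
  have hone : (1 : WithTop ℕ∞) ≤ ((k : ℕ∞) : WithTop ℕ∞) + 2 := le_trans one_le_two le_add_self
  have hdiffg : ∀ t ∈ Ioo (-R) R, DifferentiableAt ℝ g t :=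
    fun t ht => (hgat t ht).differentiableAt (lt_of_lt_of_le zero_lt_one hone).ne'
  -- deriv g is C^{k+1}
  have hg' : ContDiffOn ℝ ((k : ℕ∞) + 1) (deriv g) (Ioo (-R) R) := by
    refine hg.deriv_of_isOpen hIoo ?_
    rw [add_assoc]; norm_num
  have hg'at : ∀ t ∈ Ioo (-R) R, ContDiffAt ℝ ((k : ℕ∞) + 1) (deriv g) t :=
    fun t ht => hg'.contDiffAt (hIoo.mem_nhds ht)
  -- g is even, so deriv g 0 = 0
  have hgeven : (fun t => g (-t)) = g := by
    funext t; simp [hgdef, abs_neg]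
  have hdg0 : deriv g 0 = 0 := by
    have h1 := (hdiffg 0 h0mem).hasDerivAt
    have h2 : HasDerivAt (fun t => g (-t)) (deriv g 0 * (-1)) 0 := by
      have hneg : HasDerivAt (fun t : ℝ => -t) (-1) 0 := hasDerivAt_neg 0
      have h1' : HasDerivAt g (deriv g 0) ((fun t : ℝ => -t) 0) := by simpa using h1
      exact h1'.comp (0:ℝ) hneg
    rw [hgeven] at h2
    have := h2.unique h1
    linarith
  -- f = g on Ico 0 R
  have hsub : Ico (0:ℝ) R ⊆ Ioo (-R) R := fun r hr =>
    ⟨lt_of_lt_of_le (neg_lt_zero.2 hR) hr.1, hr.2⟩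
  have hfg : EqOn f g (Ico 0 R) := by
    intro r hr
    simp [hgdef, abs_of_nonneg hr.1]
  have goal1 : ContDiffOn ℝ ((k : ℕ∞) + 2) f (Ico 0 R) := (hg.mono hsub).congr hfg
  have hUD : UniqueDiffOn ℝ (Ico (0:ℝ) R) := uniqueDiffOn_Ico 0 R
  have h0Ico : (0:ℝ) ∈ Ico (0:ℝ) R := ⟨le_refl 0, hR⟩
  have hdW : ∀ r ∈ Ico (0:ℝ) R, derivWithin f (Ico 0 R) r = deriv g r := by
    intro r hr
    rw [derivWithin_congr hfg (hfg hr)]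
    rcases eq_or_lt_of_le hr.1 with h0 | h0
    · rw [← h0]
      exact (hdiffg 0 h0mem).derivWithin (hUD 0 h0Ico)
    · exact derivWithin_of_mem_nhds (Ico_mem_nhds h0 hr.2)
  have goal2 : derivWithin f (Ico 0 R) 0 = 0 := by rw [hdW 0 h0Ico, hdg0]
  -- the function φ
  have hball : IsOpen (ball (0:EuclideanSpace ℝ (Fin 3)) R) := isOpen_ball
  have hF1 : ContDiffOn ℝ ((k : ℕ∞) + 1) (fderiv ℝ F) (ball 0 R) := by
    refine hF.fderiv_of_isOpen hball ?_
    rw [add_assoc]; norm_num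
  have hF2 : ContDiffOn ℝ (k : ℕ∞) (fderiv ℝ (fderiv ℝ F)) (ball 0 R) :=
    hF1.fderiv_of_isOpen hball le_rfl
  set φ : ℝ → ℝ := fun t => fderiv ℝ (fderiv ℝ F) (t • e₁) e₂ e₂ with hφdef
  have hφ : ContDiffOn ℝ (k : ℕ∞) φ (Ioo (-R) R) := by
    have hcomp := (hF2.comp ((hι.of_le le_self_add).contDiffOn) hmaps)
    exact (hcomp.clm_apply contDiffOn_const).clm_apply contDiffOn_const
  have hF2' : ContDiffOn ℝ 2 F (ball 0 R) := hF.of_le le_add_self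
  -- F is differentiable on the ball
  have hdiffF : ∀ x ∈ ball (0:EuclideanSpace ℝ (Fin 3)) R, DifferentiableAt ℝ F x := fun x hx =>
    (hF.contDiffAt (hball.mem_nhds hx)).differentiableAt (lt_of_lt_of_le zero_lt_one hone).ne'
  -- ψ' in terms of g near points of the axis
  -- case t = 0 : φ 0 = deriv (deriv g) 0
  have hkey0 : φ 0 = deriv (deriv g) 0 := by
    have h0ball : (0 : EuclideanSpace ℝ (Fin 3)) ∈ ball (0:EuclideanSpace ℝ (Fin 3)) R := mem_ball_self hR
    have hline := line2aux hball hF2' h0ball e₂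
    have heq : ∀ s ∈ Ioo (-R) R, deriv g s = fderiv ℝ F ((0:EuclideanSpace ℝ (Fin 3)) + s • e₂) e₂ := by
      intro s hs
      have hmem : s • e₂ ∈ ball (0:EuclideanSpace ℝ (Fin 3)) R := by
        rw [mem_ball_zero_iff, hnorm2]; exact abs_lt.2 ⟨hs.1, hs.2⟩
      have hc : HasDerivAt (fun σ : ℝ => σ • e₂) e₂ s := by
        simpa using (hasDerivAt_id s).smul_const e₂
      have hFc : HasDerivAt (fun σ : ℝ => F (σ • e₂)) (fderiv ℝ F (s • e₂) e₂) s :=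
        by have := ((hdiffF _ hmem).hasFDerivAt).comp_hasDerivAt s hc; exact this
      have hgc : (fun σ : ℝ => F (σ • e₂)) = g := by
        funext σ; simp [hFdef, hgdef, hnorm2]
      rw [hgc] at hFc
      rw [hFc.deriv, zero_add]
    have hev : deriv g =ᶠ[nhds (0:ℝ)] (fun s : ℝ => fderiv ℝ F ((0:EuclideanSpace ℝ (Fin 3)) + s • e₂) e₂) := by
      filter_upwards [hIoo.mem_nhds h0mem] with s hs
      exact heq s hs
    have hline' : HasDerivAt (deriv g) (fderiv ℝ (fderiv ℝ F) 0 e₂ e₂) 0 :=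
      hline.congr_of_eventuallyEq hev
    rw [hline'.deriv, hφdef]
    simp
  -- case t > 0 : φ t = deriv g t / t
  have hkeyt : ∀ t, 0 < t → t < R → φ t = deriv g t / t := by
    intro t ht htR
    have htI : t ∈ Ioo (-R) R := ⟨by linarith, htR⟩
    set x : EuclideanSpace ℝ (Fin 3) := t • e₁ with hxdef
    have hxball : x ∈ ball (0:EuclideanSpace ℝ (Fin 3)) R := hmaps htI
    set ψ' : ℝ → ℝ := fun s => fderiv ℝ F (x + s • e₂) e₂ with hψ'def
    have hline : HasDerivAt ψ' (φ t) 0 := line2aux hball hF2' hxball e₂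
    set rs : ℝ → ℝ := fun s => Real.sqrt (t ^ 2 + s ^ 2) with hrsdef
    have hrs_pos : ∀ s, 0 < rs s := fun s => Real.sqrt_pos.2 (by positivity)
    have hrs0 : rs 0 = t := by rw [hrsdef]; simp [Real.sqrt_sq ht.le]
    set δ := Real.sqrt (R ^ 2 - t ^ 2) with hδdef
    have hδpos : 0 < δ := Real.sqrt_pos.2 (by nlinarith)
    have hrs_lt : ∀ s : ℝ, |s| < δ → rs s < R := by
      intro s hs
      have hsq : s ^ 2 < R ^ 2 - t ^ 2 := by
        have h1 : |s| ^ 2 < δ ^ 2 := by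
          apply sq_lt_sq' _ hs
          linarith [abs_nonneg s]
        rw [sq_abs] at h1
        rwa [hδdef, Real.sq_sqrt (by nlinarith)] at h1
      rw [hrsdef]
      calc Real.sqrt (t ^ 2 + s ^ 2) < Real.sqrt (R ^ 2) :=
            Real.sqrt_lt_sqrt (by positivity) (by nlinarith)
        _ = R := Real.sqrt_sq hR.le
    have hnormx : ∀ s : ℝ, ‖x + s • e₂‖ = rs s := fun s => hnorm12 t s
    have hmem' : ∀ s : ℝ, |s| < δ → x + s • e₂ ∈ ball (0:EuclideanSpace ℝ (Fin 3)) R := by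
      intro s hs
      rw [mem_ball_zero_iff, hnormx]
      exact hrs_lt s hs
    have hψ'eq : ∀ s : ℝ, |s| < δ → ψ' s = deriv g (rs s) * (s / rs s) := by
      intro s hs
      have hc : HasDerivAt (fun σ : ℝ => x + σ • e₂) e₂ s := by
        simpa using ((hasDerivAt_id s).smul_const e₂).const_add x
      have hFc : HasDerivAt (fun σ : ℝ => F (x + σ • e₂)) (ψ' s) s :=
        by have := ((hdiffF _ (hmem' s hs)).hasFDerivAt).comp_hasDerivAt s hc; exact this
      have hu : HasDerivAt (fun σ : ℝ => t ^ 2 + σ ^ 2) (2 * s) s := by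
        simpa using (hasDerivAt_pow 2 s).const_add (t ^ 2)
      have hsqrt : HasDerivAt rs (1 / (2 * rs s) * (2 * s)) s :=
        (Real.hasDerivAt_sqrt (by positivity)).comp s hu
      have hrsne : rs s ≠ 0 := (hrs_pos s).ne'
      have hrsI : rs s ∈ Ioo (-R) R := ⟨by linarith [hrs_pos s], hrs_lt s hs⟩
      have hgc : HasDerivAt (fun σ : ℝ => g (rs σ))
          (deriv g (rs s) * (1 / (2 * rs s) * (2 * s))) s :=
        ((hdiffg _ hrsI).hasDerivAt).comp s hsqrt
      have hfun : (fun σ : ℝ => F (x + σ • e₂)) = fun σ => g (rs σ) := by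
        funext σ
        show f ‖x + σ • e₂‖ = g (rs σ)
        rw [hnormx σ, hgdef]
        simp [abs_of_pos (hrs_pos σ)]
      rw [hfun] at hFc
      rw [hFc.unique hgc]
      field_simp
    have hψ'0 : ψ' 0 = 0 := by
      rw [hψ'eq 0 (by simpa using hδpos)]; simp
    have hrs_cont : Continuous rs :=
      Real.continuous_sqrt.comp (continuous_const.add (continuous_pow 2))
    have hcont : ContinuousAt (fun s => deriv g (rs s) / rs s) 0 := by
      have h1 : ContinuousAt (deriv g) (rs 0) := by
        rw [hrs0]; exact (hg'at t htI).continuousAt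
      have h2 : ContinuousAt rs 0 := hrs_cont.continuousAt
      exact (h1.comp h2).div h2 (by rw [hrs0]; exact ht.ne')
    have htend : Tendsto (fun s => deriv g (rs s) / rs s) (nhdsWithin (0:ℝ) {(0:ℝ)}ᶜ)
        (nhds (deriv g t / t)) := by
      have := hcont.tendsto
      rw [hrs0] at this
      exact this.mono_left nhdsWithin_le_nhds
    have hslope : Tendsto (slope ψ' 0) (nhdsWithin (0:ℝ) {(0:ℝ)}ᶜ) (nhds (deriv g t / t)) := by
      refine htend.congr' ?_
      have hmemδ : {s : ℝ | |s| < δ} ∈ nhdsWithin (0:ℝ) {(0:ℝ)}ᶜ := by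
        apply mem_nhdsWithin_of_mem_nhds
        have : {s : ℝ | |s| < δ} = ball (0:ℝ) δ := by
          ext s; simp [Real.dist_eq]
        rw [this]
        exact ball_mem_nhds 0 hδpos
      filter_upwards [hmemδ, self_mem_nhdsWithin] with s hsδ hsne
      have hsne' : s ≠ 0 := hsne
      rw [slope_def_field, hψ'eq s hsδ, hψ'0, sub_zero, sub_zero, mul_div_assoc, div_div,
        mul_comm (rs s) s, ← div_div, div_self hsne', mul_one_div]
    exact tendsto_nhds_unique (hasDerivAt_iff_tendsto_slope.1 hline) hslope
  refine ⟨goal1, goal2, ?_⟩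
  refine (hφ.mono hsub).congr ?_
  intro r hr
  rcases eq_or_lt_of_le hr.1 with h0 | h0
  · rw [← h0]
    simp only [if_pos rfl]
    rw [hkey0]
    -- derivWithin (derivWithin f Ico) Ico 0 = deriv (deriv g) 0
    have hEq : EqOn (derivWithin f (Ico 0 R)) (deriv g) (Ico 0 R) := hdW
    rw [derivWithin_congr hEq (hdW 0 h0Ico)]
    exact ((hg'at 0 h0mem).differentiableAt (lt_of_lt_of_le zero_lt_one le_add_self).ne').derivWithin (hUD 0 h0Ico)
  · rw [if_neg (ne_of_gt h0), hdW r hr, hkeyt r h0 hr.2]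
end

section
/- Let G > 0, γ > 0, R > 0. Let ρ ∈ C¹([0,R]) with ρ > 0 on [0,R) and ρ(R) = 0, let g(r) := (4πG/r²) ∫₀^r ρ(s) s² ds, and let P be differentiable and positive on (0,R) with P' = −ρ g. Take l = 1 and V^r = V^h = 1, and define 𝒜 := ρ'/ρ − P'/(γP), δρ̌ := −r⁻²(d/dr)(r² ρ V^r) + 2 ρ V^h / r (extended by 0 for r ≥ R), δP̌ := (γP/ρ) δρ̌ + γ 𝒜 P V^r, and δΦ̌ := −4πG 𝓗₁(δρ̌). Then on (0,R): δρ̌ = −ρ', δP̌ = −P', δΦ̌ = −g, and both components L₁^r := (1/ρ)(δP̌)' − (P'/ρ²) δρ̌ + (δΦ̌)' and L₁^h := (1/r)( δP̌/ρ + δΦ̌ ) vanish identically; that is, the constant pair (V^r, V^h) = (1,1) lies in the kernel of the linearized operator for degree l = 1. -/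
open Set Filter MeasureTheory

/-- The integral operator `𝓗_l`:
`(𝓗_l f)(r) = (2l+1)⁻¹ [ ∫_r^∞ f(s)(r/s)^l s ds + ∫₀^r f(s)(s/r)^{l+1} s ds ]`. -/
noncomputable def Hl (l : ℕ) (f : ℝ → ℝ) (r : ℝ) : ℝ :=
  (2 * (l : ℝ) + 1)⁻¹ *
    ((∫ s in Set.Ioi r, f s * (r / s) ^ l * s) +
      ∫ s in Set.Ioo (0 : ℝ) r, f s * (s / r) ^ (l + 1) * s)

/-- The gravitational field `g(r) = (4πG/r²)∫₀^r ρ s² ds`. -/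
noncomputable def gfield (G : ℝ) (ρ : ℝ → ℝ) (r : ℝ) : ℝ :=
  4 * Real.pi * G / r ^ 2 * ∫ s in Set.Ioo (0 : ℝ) r, ρ s * s ^ 2

/-- The Eulerian density perturbation for `l = 1`, `V^r = V^h = 1`:
`δρ̌ = −r⁻²(r²ρ)' + 2ρ/r`, extended by `0` outside `(0,R)`. -/
noncomputable def dRho1 (R : ℝ) (ρ : ℝ → ℝ) (r : ℝ) : ℝ :=
  if 0 < r ∧ r < R then
    -(r ^ 2)⁻¹ * deriv (fun s => s ^ 2 * ρ s) r + 2 * ρ r / r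
  else 0

/-- The Eulerian pressure perturbation `δP̌ = (γP/ρ)δρ̌ + γ𝒜P·V^r` with `V^r = 1` and
`𝒜 = ρ'/ρ − P'/(γP)`. -/
noncomputable def dP1 (R γ : ℝ) (ρ ρ' P : ℝ → ℝ) (r : ℝ) : ℝ :=
  γ * P r / ρ r * dRho1 R ρ r
    + γ * (ρ' r / ρ r - deriv P r / (γ * P r)) * P r

/-- The Eulerian potential perturbation `δΦ̌ = −4πG 𝓗₁(δρ̌)`. -/
noncomputable def dPhi1 (R G : ℝ) (ρ : ℝ → ℝ) (r : ℝ) : ℝ :=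
  -(4 * Real.pi * G) * Hl 1 (dRho1 R ρ) r

/-- for `l = 1` and `(V^r, V^h) = (1,1)` one has `δρ̌ = −ρ'`, `δP̌ = −P'`,
`δΦ̌ = −g` on `(0,R)`, and both components of the linearized operator vanish:
the constant pair `(1,1)` lies in the kernel of the degree-1 linearized operator. -/
theorem stmt15 (G γ R : ℝ) (hG : 0 < G) (hγ : 0 < γ) (hR : 0 < R)
    (ρ ρ' P : ℝ → ℝ)
    (hρd : ∀ r ∈ Set.Ioo (0 : ℝ) R, HasDerivAt ρ (ρ' r) r)
    (hρc : ContinuousOn ρ (Set.Icc 0 R))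
    (hρ'c : ContinuousOn ρ' (Set.Icc 0 R))
    (hρpos : ∀ r ∈ Set.Ico (0 : ℝ) R, 0 < ρ r)
    (hρR : ρ R = 0)
    (hPpos : ∀ r ∈ Set.Ioo (0 : ℝ) R, 0 < P r)
    (hPd : ∀ r ∈ Set.Ioo (0 : ℝ) R, HasDerivAt P (-(ρ r * gfield G ρ r)) r) :
    ∀ r ∈ Set.Ioo (0 : ℝ) R,
      dRho1 R ρ r = -ρ' r ∧
      dP1 R γ ρ ρ' P r = -deriv P r ∧
      dPhi1 R G ρ r = -gfield G ρ r ∧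
      (1 / ρ r) * deriv (dP1 R γ ρ ρ' P) r
          - (deriv P r / (ρ r) ^ 2) * dRho1 R ρ r
          + deriv (dPhi1 R G ρ) r = 0 ∧
      (1 / r) * (dP1 R γ ρ ρ' P r / ρ r + dPhi1 R G ρ r) = 0 := by
  have hγne : γ ≠ 0 := ne_of_gt hγ
  -- Step A : δρ̌ = -ρ' on (0,R)
  have hA : ∀ s ∈ Set.Ioo (0 : ℝ) R, dRho1 R ρ s = -ρ' s := by
    intro s hs
    have hs0 : (0 : ℝ) < s := hs.1
    have hsne : s ≠ 0 := ne_of_gt hs0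
    have hd : deriv (fun t => t ^ 2 * ρ t) s = 2 * s * ρ s + s ^ 2 * ρ' s := by
      have h1 : HasDerivAt (fun t : ℝ => t ^ 2) (2 * s) s := by
        simpa using hasDerivAt_pow 2 s
      exact (h1.mul (hρd s hs)).deriv
    rw [dRho1, if_pos ⟨hs.1, hs.2⟩, hd]
    field_simp
    ring
  -- Step B : δP̌ = ρ g on (0,R)
  have hB : ∀ x ∈ Set.Ioo (0 : ℝ) R, dP1 R γ ρ ρ' P x = ρ x * gfield G ρ x := by
    intro x hx
    have hρx : ρ x ≠ 0 := (hρpos x ⟨le_of_lt hx.1, hx.2⟩).ne'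
    have hPx : P x ≠ 0 := (hPpos x hx).ne'
    have hdP : deriv P x = -(ρ x * gfield G ρ x) := (hPd x hx).deriv
    rw [dP1, hA x hx, hdP]
    field_simp
    ring
  -- Step C : δΦ̌ = -g on (0,R)
  have hC : ∀ r ∈ Set.Ioo (0 : ℝ) R, dPhi1 R G ρ r = -gfield G ρ r := by
    intro r hr
    have hr0 : (0 : ℝ) < r := hr.1
    have hrR : r < R := hr.2
    have hrne : r ≠ 0 := ne_of_gt hr0
    -- first integral
    have hI1 : (∫ s in Set.Ioi r, dRho1 R ρ s * (r / s) ^ 1 * s) = r * ρ r := by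
      rw [setIntegral_eq_of_subset_of_forall_diff_eq_zero measurableSet_Ioi
        (fun s hs => hs.1 : Set.Ioo r R ⊆ Set.Ioi r)
        (by
          intro s hs
          have hsR : ¬ s < R := fun h => hs.2 ⟨hs.1, h⟩
          have : dRho1 R ρ s = 0 := by
            rw [dRho1, if_neg]; tauto
          rw [this, zero_mul, zero_mul])]
      rw [setIntegral_congr_fun measurableSet_Ioo
        (show Set.EqOn (fun s => dRho1 R ρ s * (r / s) ^ 1 * s) (fun s => -r * ρ' s)
            (Set.Ioo r R) by
          intro s hs
          have hs' : s ∈ Set.Ioo (0 : ℝ) R := ⟨lt_trans hr0 hs.1, hs.2⟩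
          have hsne : s ≠ 0 := ne_of_gt hs'.1
          simp only []
          rw [hA s hs', pow_one, mul_assoc, div_mul_cancel₀ _ hsne]
          ring)]
      rw [MeasureTheory.integral_const_mul]
      have hFTC : (∫ s in Set.Ioo r R, ρ' s) = ρ R - ρ r := by
        rw [← MeasureTheory.integral_Ioc_eq_integral_Ioo,
          ← intervalIntegral.integral_of_le hrR.le]
        exact intervalIntegral.integral_eq_sub_of_hasDeriv_right_of_le hrR.le
          (hρc.mono (Set.Icc_subset_Icc hr0.le le_rfl))
          (fun x hx => ((hρd x ⟨lt_trans hr0 hx.1, hx.2⟩).hasDerivWithinAt))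
          ((hρ'c.mono (Set.Icc_subset_Icc hr0.le le_rfl)).intervalIntegrable_of_Icc hrR.le)
      rw [hFTC, hρR]; ring
    -- second integral
    have hint2 : IntegrableOn (fun s => 3 * (ρ s * s ^ 2)) (Set.Ioo 0 r) := by
      apply (ContinuousOn.integrableOn_Icc ?_).mono_set Set.Ioo_subset_Icc_self
      exact ((hρc.mono (Set.Icc_subset_Icc le_rfl hrR.le)).mul
        (continuousOn_pow 2)).const_smul 3 |>.congr (fun x _ => by simp [smul_eq_mul])
    have hint3 : IntegrableOn (fun s => ρ' s * s ^ 3) (Set.Ioo 0 r) := by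
      apply (ContinuousOn.integrableOn_Icc ?_).mono_set Set.Ioo_subset_Icc_self
      exact (hρ'c.mono (Set.Icc_subset_Icc le_rfl hrR.le)).mul (continuousOn_pow 3)
    have hK3 : (∫ s in Set.Ioo (0 : ℝ) r, (3 * (ρ s * s ^ 2) + ρ' s * s ^ 3))
        = r ^ 3 * ρ r := by
      rw [← MeasureTheory.integral_Ioc_eq_integral_Ioo,
        ← intervalIntegral.integral_of_le hr0.le]
      have := intervalIntegral.integral_eq_sub_of_hasDeriv_right_of_le hr0.le
        (f := fun s => s ^ 3 * ρ s)
        (f' := fun s => 3 * (ρ s * s ^ 2) + ρ' s * s ^ 3)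
        ((continuousOn_pow 3).mul (hρc.mono (Set.Icc_subset_Icc le_rfl hrR.le)))
        (fun x hx => by
          have h1 : HasDerivAt (fun t : ℝ => t ^ 3) (3 * x ^ 2) x := by
            simpa using hasDerivAt_pow 3 x
          have h2 : HasDerivAt (fun s => s ^ 3 * ρ s) (3 * (ρ x * x ^ 2) + ρ' x * x ^ 3) x := by
            have := h1.mul (hρd x ⟨hx.1, lt_trans hx.2 hrR⟩)
            exact this.congr_deriv (by ring)
          exact h2.hasDerivWithinAt)
        (by
          rw [intervalIntegrable_iff_integrableOn_Ioo_of_le hr0.le]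
          exact hint2.add hint3)
      rw [this]; simp
    have hJ : (∫ s in Set.Ioo (0 : ℝ) r, ρ' s * s ^ 3)
        = r ^ 3 * ρ r - 3 * ∫ s in Set.Ioo (0 : ℝ) r, ρ s * s ^ 2 := by
      rw [MeasureTheory.integral_add hint2 hint3, MeasureTheory.integral_const_mul] at hK3
      linarith
    have hI2 : (∫ s in Set.Ioo (0 : ℝ) r, dRho1 R ρ s * (s / r) ^ (1 + 1) * s)
        = (r ^ 2)⁻¹ * (3 * (∫ s in Set.Ioo (0 : ℝ) r, ρ s * s ^ 2) - r ^ 3 * ρ r) := by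
      rw [setIntegral_congr_fun measurableSet_Ioo
        (show Set.EqOn (fun s => dRho1 R ρ s * (s / r) ^ (1 + 1) * s)
            (fun s => (r ^ 2)⁻¹ * -(ρ' s * s ^ 3)) (Set.Ioo 0 r) by
          intro s hs
          have hs' : s ∈ Set.Ioo (0 : ℝ) R := ⟨hs.1, lt_trans hs.2 hrR⟩
          simp only [hA s hs']
          ring)]
      rw [MeasureTheory.integral_const_mul, MeasureTheory.integral_neg, hJ]
      ring
    rw [dPhi1, Hl, hI1, hI2, gfield]
    have hπ : (2 * ((1 : ℕ) : ℝ) + 1) = 3 := by norm_num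
    rw [hπ]
    field_simp
    ring
  -- main part
  intro r hr
  have hr0 : (0 : ℝ) < r := hr.1
  have hrR : r < R := hr.2
  have hrne : r ≠ 0 := ne_of_gt hr0
  have hρr : ρ r ≠ 0 := (hρpos r ⟨hr0.le, hrR⟩).ne'
  have hIoo_nhds : Set.Ioo (0 : ℝ) R ∈ nhds r := isOpen_Ioo.mem_nhds hr
  have hdPval : deriv P r = -(ρ r * gfield G ρ r) := (hPd r hr).deriv
  -- derivative of the mass integral
  have hcρ : ContinuousOn (fun s => ρ s * s ^ 2) (Set.Ioo (0 : ℝ) R) :=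
    (hρc.mono Set.Ioo_subset_Icc_self).mul (continuousOn_pow 2)
  have hFd : HasDerivAt (fun x => ∫ s in Set.Ioo (0 : ℝ) x, ρ s * s ^ 2) (ρ r * r ^ 2) r := by
    have hint : IntervalIntegrable (fun s => ρ s * s ^ 2) volume 0 r :=
      ((hρc.mono (Set.Icc_subset_Icc le_rfl hrR.le)).mul
        (continuousOn_pow 2)).intervalIntegrable_of_Icc hr0.le
    have hmeas := hcρ.stronglyMeasurableAtFilter (μ := volume) isOpen_Ioo r hr
    have hcont : ContinuousAt (fun s => ρ s * s ^ 2) r :=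
      hcρ.continuousAt hIoo_nhds
    have h := intervalIntegral.integral_hasDerivAt_right hint hmeas hcont
    apply h.congr_of_eventuallyEq
    filter_upwards [hIoo_nhds] with x hx
    rw [intervalIntegral.integral_of_le hx.1.le, MeasureTheory.integral_Ioc_eq_integral_Ioo]
  have hgdd : HasDerivAt (gfield G ρ)
      ((0 * r ^ 2 - 4 * Real.pi * G * (2 * r ^ (2 - 1))) / (r ^ 2) ^ 2
          * (∫ s in Set.Ioo (0 : ℝ) r, ρ s * s ^ 2)
        + 4 * Real.pi * G / r ^ 2 * (ρ r * r ^ 2)) r := by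
    exact ((hasDerivAt_const r (4 * Real.pi * G)).div (hasDerivAt_pow 2 r)
      (pow_ne_zero 2 hrne)).mul hFd
  set gd := (0 * r ^ 2 - 4 * Real.pi * G * (2 * r ^ (2 - 1))) / (r ^ 2) ^ 2
          * (∫ s in Set.Ioo (0 : ℝ) r, ρ s * s ^ 2)
        + 4 * Real.pi * G / r ^ 2 * (ρ r * r ^ 2) with hgddef
  have hdPhi : deriv (dPhi1 R G ρ) r = -gd := by
    have heq : dPhi1 R G ρ =ᶠ[nhds r] fun x => -gfield G ρ x := by
      filter_upwards [hIoo_nhds] with x hx using hC x hx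
    rw [heq.deriv_eq]
    exact hgdd.neg.deriv
  have hdP1 : deriv (dP1 R γ ρ ρ' P) r = ρ' r * gfield G ρ r + ρ r * gd := by
    have heq : dP1 R γ ρ ρ' P =ᶠ[nhds r] fun x => ρ x * gfield G ρ x := by
      filter_upwards [hIoo_nhds] with x hx using hB x hx
    rw [heq.deriv_eq]
    exact ((hρd r hr).mul hgdd).deriv
  refine ⟨hA r hr, ?_, hC r hr, ?_, ?_⟩
  · rw [hB r hr, hdPval]; ring
  · rw [hdP1, hdPhi, hA r hr, hdPval]
    field_simp
    ring
  · rw [hB r hr, hC r hr]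
    field_simp
    ring
end

section
/- Let G ≥ 0, R > 0, and let ρ, V : (0,R) → ℝ be such that the product ρV is continuously differentiable on (0,R) and r² ρ(r) V(r) → 0 as r → 0+. Define f(r) := r⁻² (d/dr)(r² ρ(r) V(r)) for 0 < r < R and f(r) := 0 for r ≥ R, and assume f ∈ L²((0,∞), r²dr). Then the function δΦ̌ := 4πG 𝓗₀ f is continuously differentiable on (0,R) and satisfies (d/dr) δΦ̌(r) = −4πG ρ(r) V(r) for all 0 < r < R. -/
open Set Filter MeasureTheory

/-- `f(r) = r⁻²(r²W)'` on `(0,R)`, `0` beyond, for `W = ρV`. -/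
noncomputable def ff (R : ℝ) (W : ℝ → ℝ) (r : ℝ) : ℝ :=
  if 0 < r ∧ r < R then (r ^ 2)⁻¹ * deriv (fun s => s ^ 2 * W s) r else 0

/-- Integrability of `f s * s` on `(0, R]` from square integrability. -/
lemma auxInt (R : ℝ) (f : ℝ → ℝ) (hfm : Measurable (fun s => f s * s))
    (hsq : MeasureTheory.IntegrableOn (fun s => (f s * s) ^ 2) (Set.Ioi 0)) :
    MeasureTheory.IntegrableOn (fun s => f s * s) (Set.Ioc 0 R) := by
  have h1 : MeasureTheory.IntegrableOn (fun s => ((f s * s) ^ 2 + 1) / 2) (Set.Ioc 0 R) := by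
    refine Integrable.div_const ?_ 2
    exact (hsq.mono Ioc_subset_Ioi_self le_rfl).add
      (integrableOn_const measure_Ioc_lt_top.ne)
  refine h1.mono' hfm.aestronglyMeasurable ?_
  filter_upwards with s
  rw [Real.norm_eq_abs]
  have h2 : (0:ℝ) ≤ ((|f s * s| - 1)) ^ 2 := sq_nonneg _
  have h3 : |f s * s| ^ 2 = (f s * s) ^ 2 := sq_abs _
  nlinarith [abs_nonneg (f s * s)]

/-- Key derivative computation for `𝓗₀`. -/
lemma auxA (R : ℝ) (hR : 0 < R) (f : ℝ → ℝ) (hfm : Measurable f)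
    (hf0 : ∀ s, R ≤ s → f s = 0) (hfc : ContinuousOn f (Set.Ioo 0 R))
    (hsq : MeasureTheory.IntegrableOn (fun s => (f s * s) ^ 2) (Set.Ioi 0)) :
    ∀ r ∈ Set.Ioo (0 : ℝ) R,
      HasDerivAt (Hl 0 f)
        (-(∫ t in (0:ℝ)..r, f t * t ^ 2) * (r ^ 2)⁻¹) r := by
  have humeas : Measurable (fun s => f s * s) := hfm.mul measurable_id
  have hvmeas : Measurable (fun s => f s * s ^ 2) := hfm.mul (measurable_id.pow_const 2)
  have huInt : IntegrableOn (fun s => f s * s) (Set.Ioc 0 R) := auxInt R f humeas hsq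
  have hvInt : IntegrableOn (fun s => f s * s ^ 2) (Set.Ioc 0 R) := by
    refine ((huInt.abs).const_mul R).mono' hvmeas.aestronglyMeasurable ?_
    filter_upwards [ae_restrict_mem measurableSet_Ioc] with s hs
    have h1 : |s| ≤ R := by
      rw [abs_of_pos hs.1]; exact hs.2
    calc ‖f s * s ^ 2‖ = |f s * s| * |s| := by
          rw [Real.norm_eq_abs, ← abs_mul]; ring_nf
      _ ≤ |f s * s| * R := by
          exact mul_le_mul_of_nonneg_left h1 (abs_nonneg _)
      _ = R * |f s * s| := mul_comm _ _
  have huIoi : IntegrableOn (fun s => f s * s) (Set.Ioi 0) := by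
    rw [← Ioc_union_Ioi_eq_Ioi hR.le]
    refine huInt.union ?_
    have hEq : EqOn (fun s => f s * s) (fun _ => (0:ℝ)) (Set.Ioi R) := by
      intro s hs; simp [hf0 s (le_of_lt hs)]
    exact (integrableOn_congr_fun hEq measurableSet_Ioi).mpr (integrableOn_zero)
  -- representation of Hl 0 f on (0, R)
  have hrep : ∀ x ∈ Set.Ioo (0:ℝ) R, Hl 0 f x =
      ((∫ s in Set.Ioi (0:ℝ), f s * s) - ∫ t in (0:ℝ)..x, f t * t) +
        (∫ t in (0:ℝ)..x, f t * t ^ 2) * x⁻¹ := by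
    intro x hx
    have hx0 : (0:ℝ) < x := hx.1
    have hsplit : (∫ s in Set.Ioi (0:ℝ), f s * s) =
        (∫ t in (0:ℝ)..x, f t * t) + ∫ s in Set.Ioi x, f s * s := by
      rw [intervalIntegral.integral_of_le hx0.le, ← Ioc_union_Ioi_eq_Ioi hx0.le,
        setIntegral_union Ioc_disjoint_Ioi_same measurableSet_Ioi
          (huIoi.mono Ioc_subset_Ioi_self le_rfl)
          (huIoi.mono (Ioi_subset_Ioi hx0.le) le_rfl)]
    have h2 : (∫ s in Set.Ioo (0:ℝ) x, f s * (s / x) ^ (0 + 1) * s) =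
        (∫ t in (0:ℝ)..x, f t * t ^ 2) * x⁻¹ := by
      have hpt : ∀ s : ℝ, f s * (s / x) ^ (0 + 1) * s = (f s * s ^ 2) * x⁻¹ := by
        intro s; simp only [zero_add, pow_one, div_eq_mul_inv]; ring
      simp_rw [hpt]
      rw [integral_mul_const, intervalIntegral.integral_of_le hx0.le,
        integral_Ioc_eq_integral_Ioo]
    have h1 : (∫ s in Set.Ioi x, f s * (x / s) ^ 0 * s) = ∫ s in Set.Ioi x, f s * s := by
      simp
    rw [Hl, h1, h2, hsplit]
    push_cast
    ring
  intro r hr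
  have hr0 : (0:ℝ) < r := hr.1
  have hII1 : IntervalIntegrable (fun s => f s * s) volume 0 r :=
    (intervalIntegrable_iff_integrableOn_Ioc_of_le hr0.le).mpr
      (huInt.mono (Ioc_subset_Ioc le_rfl hr.2.le) le_rfl)
  have hII2 : IntervalIntegrable (fun s => f s * s ^ 2) volume 0 r :=
    (intervalIntegrable_iff_integrableOn_Ioc_of_le hr0.le).mpr
      (hvInt.mono (Ioc_subset_Ioc le_rfl hr.2.le) le_rfl)
  have hcont1 : ContinuousAt (fun s => f s * s) r :=
    ((hfc.continuousAt (isOpen_Ioo.mem_nhds hr)).mul continuousAt_id)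
  have hcont2 : ContinuousAt (fun s => f s * s ^ 2) r :=
    ((hfc.continuousAt (isOpen_Ioo.mem_nhds hr)).mul ((continuous_pow 2).continuousAt))
  have hd1 : HasDerivAt (fun x => ∫ t in (0:ℝ)..x, f t * t) (f r * r) r :=
    intervalIntegral.integral_hasDerivAt_right hII1
      humeas.stronglyMeasurable.stronglyMeasurableAtFilter hcont1
  have hd2 : HasDerivAt (fun x => ∫ t in (0:ℝ)..x, f t * t ^ 2) (f r * r ^ 2) r :=
    intervalIntegral.integral_hasDerivAt_right hII2
      hvmeas.stronglyMeasurable.stronglyMeasurableAtFilter hcont2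
  have hd3 : HasDerivAt (fun x : ℝ => x⁻¹) (-(r ^ 2)⁻¹) r := hasDerivAt_inv hr0.ne'
  have hD : HasDerivAt (fun x =>
      ((∫ s in Set.Ioi (0:ℝ), f s * s) - ∫ t in (0:ℝ)..x, f t * t) +
        (∫ t in (0:ℝ)..x, f t * t ^ 2) * x⁻¹)
      ((0 - f r * r) + (f r * r ^ 2 * r⁻¹ +
        (∫ t in (0:ℝ)..r, f t * t ^ 2) * -(r ^ 2)⁻¹)) r :=
    ((hasDerivAt_const r _).sub hd1).add (hd2.mul hd3)
  have heq : Hl 0 f =ᶠ[nhds r] (fun x =>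
      ((∫ s in Set.Ioi (0:ℝ), f s * s) - ∫ t in (0:ℝ)..x, f t * t) +
        (∫ t in (0:ℝ)..x, f t * t ^ 2) * x⁻¹) :=
    Filter.eventuallyEq_of_mem (isOpen_Ioo.mem_nhds hr) (fun x hx => hrep x hx)
  have hfinal := hD.congr_of_eventuallyEq heq
  refine hfinal.congr_deriv ?_
  have hrne : r ≠ 0 := hr0.ne'
  have hk : f r * r ^ 2 * r⁻¹ = f r * r := by
    rw [pow_two, mul_assoc, mul_assoc, mul_inv_cancel₀ hrne, mul_one]
  rw [hk]
  ring

/-- for the radial (`l = 0`) perturbation, `δΦ̌ = 4πG𝓗₀f` with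
`f = r⁻²(r²ρV)'` is continuously differentiable on `(0,R)` and
`(d/dr)δΦ̌ = −4πGρV` there. -/
theorem stmt18 (G R : ℝ) (hG : 0 ≤ G) (hR : 0 < R) (ρ V : ℝ → ℝ)
    (hW : ∀ r ∈ Set.Ioo (0 : ℝ) R, DifferentiableAt ℝ (fun s => ρ s * V s) r)
    (hWc : ContinuousOn (deriv (fun s => ρ s * V s)) (Set.Ioo 0 R))
    (h0 : Filter.Tendsto (fun r => r ^ 2 * (ρ r * V r))
      (nhdsWithin 0 (Set.Ioi 0)) (nhds 0))
    (hf2 : MeasureTheory.IntegrableOn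
      (fun r => ff R (fun s => ρ s * V s) r ^ 2 * r ^ 2) (Set.Ioi 0)) :
    (∀ r ∈ Set.Ioo (0 : ℝ) R,
      HasDerivAt (fun x => 4 * Real.pi * G * Hl 0 (ff R (fun s => ρ s * V s)) x)
        (-(4 * Real.pi * G * (ρ r * V r))) r) ∧
    ContinuousOn (deriv (fun x => 4 * Real.pi * G * Hl 0 (ff R (fun s => ρ s * V s)) x))
      (Set.Ioo 0 R) := by
  set W : ℝ → ℝ := fun s => ρ s * V s with hWdef
  set f : ℝ → ℝ := ff R W with hfdef
  -- measurability of f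
  have hfm : Measurable f := by
    rw [hfdef]
    unfold ff
    refine Measurable.ite ?_ ?_ measurable_const
    · exact measurableSet_Ioo (a := (0:ℝ)) (b := R)
    · exact ((measurable_id.pow_const 2).inv).mul (measurable_deriv _)
  -- f vanishes beyond R
  have hf0 : ∀ s, R ≤ s → f s = 0 := by
    intro s hs
    rw [hfdef]; unfold ff
    rw [if_neg]
    rintro ⟨-, h⟩
    exact absurd h (not_lt.mpr hs)
  -- derivative of s² W s on (0, R)
  have hderiv2 : ∀ x ∈ Set.Ioo (0:ℝ) R,
      HasDerivAt (fun s => s ^ 2 * W s) (2 * x * W x + x ^ 2 * deriv W x) x := by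
    intro x hx
    have h1 : HasDerivAt (fun s : ℝ => s ^ 2) (2 * x) x := by
      simpa using hasDerivAt_pow 2 x
    exact h1.mul (hW x hx).hasDerivAt
  have hderiv2' : ∀ x ∈ Set.Ioo (0:ℝ) R,
      deriv (fun s => s ^ 2 * W s) x = 2 * x * W x + x ^ 2 * deriv W x :=
    fun x hx => (hderiv2 x hx).deriv
  have hfval : ∀ x ∈ Set.Ioo (0:ℝ) R,
      f x = (x ^ 2)⁻¹ * deriv (fun s => s ^ 2 * W s) x := by
    intro x hx
    rw [hfdef]; unfold ff
    rw [if_pos ⟨hx.1, hx.2⟩]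
  have hWcont : ContinuousOn W (Set.Ioo 0 R) :=
    fun x hx => (hW x hx).continuousAt.continuousWithinAt
  -- continuity of f on (0, R)
  have hfc : ContinuousOn f (Set.Ioo 0 R) := by
    have hgood : ContinuousOn
        (fun x => (x ^ 2)⁻¹ * (2 * x * W x + x ^ 2 * deriv W x)) (Set.Ioo 0 R) := by
      refine ContinuousOn.mul ?_ ?_
      · refine ((continuous_pow 2).continuousOn).inv₀ ?_
        intro x hx
        exact pow_ne_zero 2 (ne_of_gt hx.1)
      · refine ContinuousOn.add ?_ ?_
        · exact (continuousOn_const.mul continuousOn_id).mul hWcont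
        · exact ((continuous_pow 2).continuousOn).mul hWc
    refine hgood.congr ?_
    intro x hx
    rw [hfval x hx, hderiv2' x hx]
  -- square integrability
  have hsq : MeasureTheory.IntegrableOn (fun s => (f s * s) ^ 2) (Set.Ioi 0) := by
    have : (fun s => (f s * s) ^ 2) = (fun s => ff R W s ^ 2 * s ^ 2) := by
      funext s; rw [mul_pow, hfdef]
    rw [this]; exact hf2
  -- the FTC identity: ∫ t in 0..r, f t * t² = r² W r for r ∈ (0, R)
  have hvmeas : Measurable (fun s => f s * s ^ 2) := hfm.mul (measurable_id.pow_const 2)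
  have humeas : Measurable (fun s => f s * s) := hfm.mul measurable_id
  have huInt : IntegrableOn (fun s => f s * s) (Set.Ioc 0 R) := auxInt R f humeas hsq
  have hvInt : IntegrableOn (fun s => f s * s ^ 2) (Set.Ioc 0 R) := by
    refine ((huInt.abs).const_mul R).mono' hvmeas.aestronglyMeasurable ?_
    filter_upwards [ae_restrict_mem measurableSet_Ioc] with s hs
    have h1 : |s| ≤ R := by rw [abs_of_pos hs.1]; exact hs.2
    calc ‖f s * s ^ 2‖ = |f s * s| * |s| := by
          rw [Real.norm_eq_abs, ← abs_mul]; ring_nf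
      _ ≤ |f s * s| * R := mul_le_mul_of_nonneg_left h1 (abs_nonneg _)
      _ = R * |f s * s| := mul_comm _ _
  have hvIIc : ∀ x ∈ Set.Ioo (0:ℝ) R, IntervalIntegrable (fun s => f s * s ^ 2) volume 0 x :=
    fun x hx => (intervalIntegrable_iff_integrableOn_Ioc_of_le hx.1.le).mpr
      (hvInt.mono (Ioc_subset_Ioc le_rfl hx.2.le) le_rfl)
  have hvderiv : ∀ x ∈ Set.Ioo (0:ℝ) R,
      HasDerivAt (fun s => s ^ 2 * W s) (f x * x ^ 2) x := by
    intro x hx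
    have h := hderiv2 x hx
    have hx2 : (x:ℝ) ^ 2 ≠ 0 := pow_ne_zero 2 (ne_of_gt hx.1)
    have : f x * x ^ 2 = 2 * x * W x + x ^ 2 * deriv W x := by
      rw [hfval x hx, hderiv2' x hx]
      field_simp
    rw [this]
    exact h
  have hFTC : ∀ r ∈ Set.Ioo (0:ℝ) R, (∫ t in (0:ℝ)..r, f t * t ^ 2) = r ^ 2 * W r := by
    intro r hr
    have hr0 : (0:ℝ) < r := hr.1
    -- g2 is continuous at 0 within [0, r]
    have hvIcc : IntegrableOn (fun s => f s * s ^ 2) (Set.uIcc 0 r) := by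
      rw [Set.uIcc_of_le hr0.le]
      rw [integrableOn_Icc_iff_integrableOn_Ioc]
      exact hvInt.mono (Ioc_subset_Ioc le_rfl hr.2.le) le_rfl
    have hg2cont : ContinuousOn (fun x => ∫ t in (0:ℝ)..x, f t * t ^ 2) (Set.uIcc 0 r) :=
      intervalIntegral.continuousOn_primitive_interval hvIcc
    have hmem0 : (0:ℝ) ∈ Set.uIcc 0 r := Set.left_mem_uIcc
    have hg2at0 : Filter.Tendsto (fun x => ∫ t in (0:ℝ)..x, f t * t ^ 2)
        (nhdsWithin 0 (Set.Ioo 0 r)) (nhds 0) := by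
      have h1 := (hg2cont 0 hmem0)
      have h2 : Filter.Tendsto (fun x => ∫ t in (0:ℝ)..x, f t * t ^ 2)
          (nhdsWithin 0 (Set.uIcc 0 r)) (nhds (∫ t in (0:ℝ)..(0:ℝ), f t * t ^ 2)) := h1
      rw [intervalIntegral.integral_same] at h2
      refine h2.mono_left (nhdsWithin_mono _ ?_)
      rw [Set.uIcc_of_le hr0.le]
      exact Set.Ioo_subset_Icc_self
    -- for ε ∈ (0, r) : ∫ 0..r = ∫ 0..ε + (r²W r - ε²W ε)
    have hkey : ∀ ε ∈ Set.Ioo (0:ℝ) r, (∫ t in (0:ℝ)..r, f t * t ^ 2) =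
        (∫ t in (0:ℝ)..ε, f t * t ^ 2) + (r ^ 2 * W r - ε ^ 2 * W ε) := by
      intro ε hε
      have hεIoo : ε ∈ Set.Ioo (0:ℝ) R := ⟨hε.1, lt_trans hε.2 hr.2⟩
      have hIIεr : IntervalIntegrable (fun s => f s * s ^ 2) volume ε r := by
        refine (intervalIntegrable_iff_integrableOn_Ioc_of_le hε.2.le).mpr ?_
        exact hvInt.mono (Ioc_subset_Ioc hε.1.le hr.2.le) le_rfl
      have hsub : (∫ t in ε..r, f t * t ^ 2) = r ^ 2 * W r - ε ^ 2 * W ε := by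
        have hd := intervalIntegral.integral_eq_sub_of_hasDerivAt
          (f := fun s => s ^ 2 * W s) (f' := fun s => f s * s ^ 2) (a := ε) (b := r)
          (fun x hx => by
            rw [Set.uIcc_of_le hε.2.le] at hx
            exact hvderiv x ⟨lt_of_lt_of_le hε.1 hx.1, lt_of_le_of_lt hx.2 hr.2⟩) hIIεr
        simpa using hd
      have hadd := intervalIntegral.integral_add_adjacent_intervals
        (hvIIc ε hεIoo) hIIεr
      rw [← hadd, hsub]
    -- take the limit ε → 0⁺ along (0, r)
    have hne : (nhdsWithin (0:ℝ) (Set.Ioo 0 r)).NeBot := by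
      refine mem_closure_iff_nhdsWithin_neBot.mp ?_
      rw [closure_Ioo hr0.ne]
      exact ⟨le_rfl, hr0.le⟩
    have hlhs : Filter.Tendsto (fun _ : ℝ => (∫ t in (0:ℝ)..r, f t * t ^ 2))
        (nhdsWithin 0 (Set.Ioo 0 r)) (nhds (∫ t in (0:ℝ)..r, f t * t ^ 2)) :=
      tendsto_const_nhds
    have hrhs : Filter.Tendsto
        (fun ε => (∫ t in (0:ℝ)..ε, f t * t ^ 2) + (r ^ 2 * W r - ε ^ 2 * W ε))
        (nhdsWithin 0 (Set.Ioo 0 r)) (nhds (0 + (r ^ 2 * W r - 0))) := by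
      refine Filter.Tendsto.add hg2at0 (Filter.Tendsto.const_sub _ ?_)
      refine h0.mono_left (nhdsWithin_mono _ ?_)
      exact fun x hx => hx.1
    have heq2 : Filter.Tendsto (fun _ : ℝ => (∫ t in (0:ℝ)..r, f t * t ^ 2))
        (nhdsWithin 0 (Set.Ioo 0 r)) (nhds (0 + (r ^ 2 * W r - 0))) := by
      refine hrhs.congr' ?_
      filter_upwards [eventually_mem_nhdsWithin] with ε hε
      exact (hkey ε hε).symm
    have hfin := tendsto_nhds_unique hlhs heq2
    rw [hfin]; ring
  -- main derivative statement
  have hmain : ∀ r ∈ Set.Ioo (0 : ℝ) R,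
      HasDerivAt (fun x => 4 * Real.pi * G * Hl 0 f x)
        (-(4 * Real.pi * G * (ρ r * V r))) r := by
    intro r hr
    have hA := auxA R hR f hfm hf0 hfc hsq r hr
    rw [hFTC r hr] at hA
    have hr2 : (r:ℝ) ^ 2 ≠ 0 := pow_ne_zero 2 (ne_of_gt hr.1)
    have hval : -(r ^ 2 * W r) * (r ^ 2)⁻¹ = -(W r) := by
      rw [neg_mul, mul_comm (r ^ 2) (W r), mul_assoc, mul_inv_cancel₀ hr2, mul_one]
    rw [hval] at hA
    have := hA.const_mul (4 * Real.pi * G)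
    have hval2 : 4 * Real.pi * G * -(W r) = -(4 * Real.pi * G * (ρ r * V r)) := by
      rw [hWdef]; ring
    rw [hval2] at this
    exact this
  constructor
  · exact hmain
  · have hEq : Set.EqOn (deriv (fun x => 4 * Real.pi * G * Hl 0 f x))
        (fun r => -(4 * Real.pi * G * (ρ r * V r))) (Set.Ioo 0 R) := by
      intro r hr
      exact (hmain r hr).deriv
    refine ContinuousOn.congr ?_ hEq
    refine ContinuousOn.neg ?_
    exact continuousOn_const.mul hWcont
end
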